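/- Let $d \in \{2,3\}$, $\Gamma \subset \mathbb{R}^d$ a lattice, $t \in \mathbb{R}^d$, $\gamma \in \Gamma$, and suppose $|\gamma+t| \neq |\gamma + \gamma_1 + t|$ for all nonzero $\gamma_1 \in \Gamma$. Then $\sum_{\gamma_1 \in \Gamma(k+)} \big(|\gamma+t|^2 - |\gamma+\gamma_1+t|^2\big)^{-2} < \infty$, where $\Gamma(k+)$ is any subset of $\Gamma \setminus \{0\}$ avoiding the zero denominators. -/

import Mathlib

open Finset

lemma aux_summable_int : Summable fun k : ℤ => ((1:ℝ) + |(k:ℝ)|) ^ (-(4/3) : ℝ) := by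
  have h := (Real.summable_one_div_int_add_rpow (1/2) (4/3)).2 (by norm_num)
  apply h.of_nonneg_of_le (fun k => Real.rpow_nonneg (by positivity) _)
  intro k
  have hk2 : (1:ℝ)/2 ≤ |(k:ℝ) + 1/2| := by
    rcases le_or_gt 0 k with hk | hk
    · have : (0:ℝ) ≤ (k:ℝ) := by exact_mod_cast hk
      rw [abs_of_nonneg (by linarith)]; linarith
    · have hk1 : k ≤ -1 := by omega
      have : (k:ℝ) ≤ -1 := by exact_mod_cast hk1
      rw [abs_of_nonpos (by linarith)]; linarith
  have hb : |(k:ℝ) + 1/2| ≤ 1 + |(k:ℝ)| := by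
    calc |(k:ℝ) + 1/2| ≤ |(k:ℝ)| + |(1/2:ℝ)| := abs_add_le _ _
      _ ≤ 1 + |(k:ℝ)| := by rw [abs_of_nonneg (by norm_num : (0:ℝ) ≤ 1/2)]; linarith
  rw [Real.rpow_neg (by positivity), ← one_div]
  apply one_div_le_one_div_of_le
  · exact Real.rpow_pos_of_pos (by linarith) _
  · exact Real.rpow_le_rpow (abs_nonneg _) hb (by norm_num)

lemma aux_pi_summable {g : ℤ → ℝ} (hg0 : ∀ k, 0 ≤ g k) (hg : Summable g) :
    ∀ n : ℕ, Summable fun m : Fin n → ℤ => ∏ i, g (m i) := by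
  intro n
  induction n with
  | zero =>
      haveI : Unique (Fin 0 → ℤ) := ⟨⟨fun i => i.elim0⟩, fun f => funext fun i => i.elim0⟩
      exact .of_finite
  | succ n ih =>
      have h2 : Summable fun p : ℤ × (Fin n → ℤ) => g p.1 * ∏ i, g (p.2 i) :=
        @Summable.mul_of_nonneg ℤ (Fin n → ℤ) g (fun m : Fin n → ℤ => ∏ i, g (m i)) hg ih
          (fun k => hg0 k) (fun m => Finset.prod_nonneg fun i _ => hg0 _)
      rw [← (Fin.consEquiv (fun _ : Fin (n+1) => ℤ)).summable_iff]
      refine h2.congr fun p => ?_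
      simp only [Function.comp_apply, Fin.consEquiv_apply]
      rw [Fin.prod_univ_succ]
      simp

/-- The purely real-number estimate used for the large lattice points. -/
lemma aux_key (d : ℕ) (hd4 : (d:ℝ) * (4/3) ≤ 4) {a u zn nm P C : ℝ}
    (ha : 0 ≤ a) (hC : 0 < C) (hzn : 4*a + 4 ≤ zn) (hlow : zn - a ≤ u)
    (hnm1 : 1 ≤ nm) (hnmC : nm ≤ C * zn) (hP1 : 1 ≤ P) (hPle : P ≤ (2*nm)^d) :
    ((a^2 - u^2)⁻¹)^2 ≤ 64 * C^4 * (P ^ ((4:ℝ)/3))⁻¹ := by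
  have hzn0 : 0 < zn := by linarith
  have hD : zn^2/2 ≤ u^2 - a^2 := by
    have hza : 0 ≤ zn - a := by linarith
    have hsq : (zn - a)^2 ≤ u^2 := pow_le_pow_left₀ hza hlow 2
    nlinarith
  have hP0 : 0 < P := lt_of_lt_of_le one_pos hP1
  have hnm0 : (0:ℝ) < 2*nm := by linarith
  have hQ : P ^ ((4:ℝ)/3) ≤ 16 * nm^4 := by
    calc P ^ ((4:ℝ)/3) ≤ ((2*nm)^d) ^ ((4:ℝ)/3) :=
          Real.rpow_le_rpow hP0.le hPle (by norm_num)
      _ = (2*nm) ^ ((d:ℝ) * (4/3)) := by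
          rw [← Real.rpow_natCast (2*nm) d, ← Real.rpow_mul hnm0.le]
      _ ≤ (2*nm) ^ ((4:ℝ)) := Real.rpow_le_rpow_of_exponent_le (by linarith) hd4
      _ = 16 * nm^4 := by
          rw [show ((4:ℝ)) = ((4:ℕ):ℝ) by norm_num, Real.rpow_natCast]
          ring
  have hQ2 : P ^ ((4:ℝ)/3) ≤ 16 * (C*zn)^4 := by
    refine hQ.trans ?_
    have h4 : nm^4 ≤ (C*zn)^4 := pow_le_pow_left₀ (by linarith) hnmC 4
    linarith
  have hiv : (16 * (C*zn)^4)⁻¹ ≤ (P ^ ((4:ℝ)/3))⁻¹ :=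
    inv_anti₀ (Real.rpow_pos_of_pos hP0 _) hQ2
  calc ((a^2 - u^2)⁻¹)^2 = ((u^2 - a^2)^2)⁻¹ := by
        rw [inv_pow]; congr 1; ring
    _ ≤ ((zn^2/2)^2)⁻¹ :=
        inv_anti₀ (by positivity) (pow_le_pow_left₀ (by positivity) hD 2)
    _ = 4/zn^4 := by
        rw [div_pow, inv_div]
        norm_num
        ring
    _ = 64*C^4 * (16 * (C*zn)^4)⁻¹ := by
        field_simp
        ring
    _ ≤ 64*C^4 * (P ^ ((4:ℝ)/3))⁻¹ := by
        apply mul_le_mul_of_nonneg_left hiv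
        positivity

/-- Estimate (55): in dimensions 2 and 3 the reciprocals of the denominators
`|γ+t|² - |γ+γ₁+t|²` are square-summable over any subset of the lattice avoiding
zero denominators. -/
theorem stmt_10 (d : ℕ) (hd : d = 2 ∨ d = 3)
    (v : Module.Basis (Fin d) ℝ (EuclideanSpace ℝ (Fin d)))
    (t : EuclideanSpace ℝ (Fin d))
    (γ : EuclideanSpace ℝ (Fin d))
    (hγ : ∃ m : Fin d → ℤ, γ = ∑ i, (m i : ℝ) • v i)
    (h : ∀ x : EuclideanSpace ℝ (Fin d),
      (∃ m : Fin d → ℤ, x = ∑ i, (m i : ℝ) • v i) → x ≠ 0 → ‖γ + t‖ ≠ ‖γ + x + t‖)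
    (S : Set (EuclideanSpace ℝ (Fin d)))
    (hS : S ⊆ {x | (∃ m : Fin d → ℤ, x = ∑ i, (m i : ℝ) • v i) ∧ x ≠ 0}) :
    Summable fun γ1 : S => ((‖γ + t‖ ^ 2 - ‖γ + (γ1 : EuclideanSpace ℝ (Fin d)) + t‖ ^ 2)⁻¹) ^ 2 := by
  classical
  have hd4 : (d:ℝ) * (4/3) ≤ 4 := by rcases hd with h'|h' <;> subst h' <;> norm_num
  -- integer coordinates of lattice points
  have hmem : ∀ x : S, ∃ m : Fin d → ℤ,
      (x : EuclideanSpace ℝ (Fin d)) = ∑ i, (m i : ℝ) • v i := fun x => (hS x.2).1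
  choose e he using hmem
  have hne : ∀ x : S, e x ≠ 0 := by
    intro x hx0
    apply (hS x.2).2
    have := he x
    rw [hx0] at this
    simpa using this
  have hinj : Function.Injective e := by
    intro x y hxy
    apply Subtype.ext
    rw [he x, he y, hxy]
  -- coordinate vs norm comparison
  set L : EuclideanSpace ℝ (Fin d) →L[ℝ] (Fin d → ℝ) :=
    (v.equivFunL : EuclideanSpace ℝ (Fin d) →L[ℝ] (Fin d → ℝ)) with hL
  have hC0 : 0 < ‖L‖ + 1 := by positivity
  have hrepr : ∀ x : S, (fun i => ((e x i : ℝ))) = L (x : EuclideanSpace ℝ (Fin d)) := by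
    intro x
    have h1 : ⇑(v.repr (x : EuclideanSpace ℝ (Fin d))) = fun i => ((e x i : ℝ)) := by
      rw [he x]
      exact v.repr_sum_self _
    have h2 : L (x : EuclideanSpace ℝ (Fin d)) = ⇑(v.repr (x : EuclideanSpace ℝ (Fin d))) := rfl
    rw [h2, h1]
  have hcoord : ∀ x : S, ‖(fun i => ((e x i : ℝ)))‖ ≤ (‖L‖ + 1) * ‖(x : EuclideanSpace ℝ (Fin d))‖ := by
    intro x
    rw [hrepr x]
    calc ‖L (x : EuclideanSpace ℝ (Fin d))‖ ≤ ‖L‖ * ‖(x : EuclideanSpace ℝ (Fin d))‖ :=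
          L.le_opNorm _
      _ ≤ (‖L‖ + 1) * ‖(x : EuclideanSpace ℝ (Fin d))‖ := by
          apply mul_le_mul_of_nonneg_right _ (norm_nonneg _)
          linarith
  have hone : ∀ x : S, (1:ℝ) ≤ ‖(fun i => ((e x i : ℝ)))‖ := by
    intro x
    obtain ⟨i, hi⟩ := Function.ne_iff.mp (hne x)
    have h1 : (1:ℝ) ≤ |(e x i : ℝ)| := by
      have := Int.one_le_abs (by simpa using hi)
      exact_mod_cast this
    have h2 := norm_le_pi_norm (fun j => ((e x j : ℝ))) i
    rw [Real.norm_eq_abs] at h2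
    linarith
  set s : Set S := {x : S | ‖(x : EuclideanSpace ℝ (Fin d))‖ < 4*‖γ + t‖ + 4} with hs
  -- the small lattice points form a finite set
  have hsfin : s.Finite := by
    set N : ℤ := ⌈(‖L‖ + 1)*(4*‖γ + t‖ + 4)⌉ with hN
    have himg : e '' s ⊆ Set.pi Set.univ (fun _ : Fin d => Set.Icc (-N) N) := by
      rintro m ⟨x, hx, rfl⟩
      intro i _
      have h1 : |(e x i : ℝ)| ≤ ‖(fun j => ((e x j : ℝ)))‖ := by
        have := norm_le_pi_norm (fun j => ((e x j : ℝ))) i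
        rwa [Real.norm_eq_abs] at this
      have hx' : ‖(x : EuclideanSpace ℝ (Fin d))‖ ≤ 4*‖γ + t‖ + 4 := le_of_lt hx
      have h2 : ‖(fun j => ((e x j : ℝ)))‖ ≤ (‖L‖ + 1) * (4*‖γ + t‖ + 4) :=
        (hcoord x).trans (mul_le_mul_of_nonneg_left hx' hC0.le)
      have h3 : |(e x i : ℝ)| ≤ (N:ℝ) := (h1.trans h2).trans (Int.le_ceil _)
      have h4 : |e x i| ≤ N := by
        exact_mod_cast (by push_cast; exact h3 : ((|e x i| : ℤ) : ℝ) ≤ (N:ℝ))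
      exact Set.mem_Icc.mpr (abs_le.mp h4)
    have hfinT : (Set.pi Set.univ fun _ : Fin d => Set.Icc (-N) N).Finite :=
      Set.Finite.pi fun _ => Set.finite_Icc _ _
    exact Set.Finite.of_finite_image (hfinT.subset himg) hinj.injOn
  -- reduce to the complement of the small set
  have hsum_s : Summable ((fun γ1 : S =>
      ((‖γ + t‖ ^ 2 - ‖γ + (γ1 : EuclideanSpace ℝ (Fin d)) + t‖ ^ 2)⁻¹) ^ 2) ∘ ((↑) : s → S)) := by
    haveI := hsfin.to_subtype
    exact .of_finite
  rw [← hsum_s.summable_compl_iff]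
  -- majorant
  set F : (Fin d → ℤ) → ℝ := fun m => ∏ i, ((1:ℝ) + |(m i : ℝ)|) ^ (-(4/3) : ℝ) with hFdef
  have hF : Summable F :=
    aux_pi_summable (fun k => Real.rpow_nonneg (by positivity) _) aux_summable_int d
  have hinj2 : Function.Injective (fun x : ↥sᶜ => e (x : S)) := by
    intro p q hpq
    exact Subtype.ext (hinj hpq)
  have hmaj : Summable (fun x : ↥sᶜ => (64 * (‖L‖ + 1)^4) * F (e (x : S))) :=
    (hF.mul_left (64 * (‖L‖ + 1)^4)).comp_injective hinj2
  apply Summable.of_nonneg_of_le _ _ hmaj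
  · intro x
    simp only [Function.comp_apply]
    positivity
  rintro ⟨x, hxc⟩
  simp only [Function.comp_apply]
  have hRz : 4*‖γ + t‖ + 4 ≤ ‖(x : EuclideanSpace ℝ (Fin d))‖ := not_lt.mp hxc
  -- F evaluated at the coordinates
  have hP0 : (0:ℝ) < ∏ i, ((1:ℝ) + |(e x i : ℝ)|) := by positivity
  have hFm : F (e x) = ((∏ i, ((1:ℝ) + |(e x i : ℝ)|)) ^ ((4:ℝ)/3))⁻¹ := by
    calc F (e x) = (∏ i, ((1:ℝ) + |(e x i : ℝ)|)) ^ (-(4/3) : ℝ) :=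
          Real.finset_prod_rpow _ _ (fun i _ => by positivity) _
      _ = ((∏ i, ((1:ℝ) + |(e x i : ℝ)|)) ^ ((4:ℝ)/3))⁻¹ := by
          rw [show (-(4/3) : ℝ) = -((4:ℝ)/3) by norm_num, Real.rpow_neg hP0.le]
  rw [hFm]
  -- lower bound for the norm of the sum
  have hlow : ‖(x : EuclideanSpace ℝ (Fin d))‖ - ‖γ + t‖ ≤ ‖γ + (x : EuclideanSpace ℝ (Fin d)) + t‖ := by
    have heq : γ + (x : EuclideanSpace ℝ (Fin d)) + t
        = ((x : EuclideanSpace ℝ (Fin d)) + (γ + t)) := by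
      rw [add_comm γ _, add_assoc]
    have h5 := norm_sub_le ((x : EuclideanSpace ℝ (Fin d)) + (γ + t)) (γ + t)
    rw [add_sub_cancel_right] at h5
    rw [heq]
    linarith
  -- product bound
  have hPle : ∏ i, ((1:ℝ) + |(e x i : ℝ)|) ≤ (2*‖(fun i => ((e x i : ℝ)))‖)^d := by
    calc ∏ i, ((1:ℝ) + |(e x i : ℝ)|) ≤ ∏ _i : Fin d, (2*‖(fun i => ((e x i : ℝ)))‖) := by
          apply Finset.prod_le_prod
          · intro i _; positivity
          · intro i _
            have h2 := norm_le_pi_norm (fun j => ((e x j : ℝ))) i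
            rw [Real.norm_eq_abs] at h2
            have := hone x
            linarith
      _ = (2*‖(fun i => ((e x i : ℝ)))‖)^d := by
          rw [Finset.prod_const, Finset.card_univ, Fintype.card_fin]
  have hP1 : (1:ℝ) ≤ ∏ i, ((1:ℝ) + |(e x i : ℝ)|) := by
    calc (1:ℝ) = ∏ _i : Fin d, (1:ℝ) := by simp
      _ ≤ ∏ i, ((1:ℝ) + |(e x i : ℝ)|) := by
          apply Finset.prod_le_prod
          · intro i _; norm_num
          · intro i _
            have := abs_nonneg ((e x i : ℝ))
            linarith
  exact aux_key d hd4 (norm_nonneg _) hC0 hRz hlow (hone x) (hcoord x) hP1 hPle
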